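/- With the same sl₂-type setup (W = ⊕_{k=0}^{2n} W_k, L raising degree by 2, Λ lowering degree by 2, H acting as (k-n) on W_k, [L,Λ] = H), if α ∈ W_k is primitive (Λα = 0), nonzero, and k ≤ n, then L^{n-k} α ≠ 0. That is, the map L^{n-k} restricted to primitive elements of degree k ≤ n is injective. -/
import Mathlib


/-- In the `sl₂`-setup `W = ⊕_{k=0}^{2n} W_k` with `[L, Λ] = H`, for a nonzero
primitive element `α` (`Λ α = 0`) of degree `k ≤ n`, one has `L^(n-k) α ≠ 0`. -/
theorem stmt_11 (K : Type*) [Field K] [CharZero K] (W : Type*) [AddCommGroup W] [Module K W]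
    (n : ℕ) (Wk : ℤ → Submodule K W)
    (hdsum : DirectSum.IsInternal Wk)
    (hbound : ∀ k : ℤ, (k < 0 ∨ 2 * (n : ℤ) < k) → Wk k = ⊥)
    (L Lam H : W →ₗ[K] W)
    (hL : ∀ k : ℤ, ∀ x ∈ Wk k, L x ∈ Wk (k + 2))
    (hLam : ∀ k : ℤ, ∀ x ∈ Wk k, Lam x ∈ Wk (k - 2))
    (hH : ∀ k : ℤ, ∀ x ∈ Wk k, H x = ((k - (n : ℤ) : ℤ) : K) • x)
    (hcomm : L ∘ₗ Lam - Lam ∘ₗ L = H) :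
    ∀ k : ℤ, ∀ α ∈ Wk k, Lam α = 0 → α ≠ 0 → k ≤ (n : ℤ) →
      (L ^ ((n : ℤ) - k).toNat) α ≠ 0 := by
  intro k α hα hprim hne hk hzero
  classical
  have hc : ∀ x : W, Lam (L x) = L (Lam x) - H x := by
    intro x
    have h := LinearMap.ext_iff.mp hcomm x
    simp only [LinearMap.sub_apply, LinearMap.comp_apply] at h
    rw [← h]; abel
  have hpow : ∀ i : ℕ, (L ^ (i + 1)) α = L ((L ^ i) α) := by
    intro i; rw [pow_succ', Module.End.mul_apply]
  have hmem : ∀ i : ℕ, (L ^ i) α ∈ Wk (k + 2 * i) := by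
    intro i
    induction i with
    | zero => simpa using hα
    | succ i ih =>
      have h2 := hL _ _ ih
      have heq : k + 2 * ((i : ℤ) + 1) = (k + 2 * i) + 2 := by ring
      rw [hpow]
      push_cast
      rw [heq]
      exact h2
  have key : ∀ i : ℕ,
      Lam ((L ^ (i + 1)) α)
        = ((((i : ℤ) + 1) * ((n : ℤ) - k - i) : ℤ) : K) • (L ^ i) α := by
    intro i
    induction i with
    | zero =>
      rw [hpow]
      simp only [pow_zero, Module.End.one_apply]
      rw [hc, hprim, map_zero, hH k α hα, zero_sub, ← neg_smul, ← Int.cast_neg]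
      congr 2
      ring
    | succ i ih =>
      rw [hpow, hc, ih, map_smul, ← hpow, hH _ _ (hmem (i + 1)), ← sub_smul,
        ← Int.cast_sub]
      congr 2
      push_cast
      ring
  have hex : ∃ i, (L ^ i) α = 0 := ⟨_, hzero⟩
  have hiz := Nat.find_spec hex
  set i := Nat.find hex with hi
  have hipos : 0 < i := by
    rcases Nat.eq_zero_or_pos i with h | h
    · exfalso; apply hne; simpa [h] using hiz
    · exact h
  have hprev : (L ^ (i - 1)) α ≠ 0 := Nat.find_min hex (by omega)
  have hle : i ≤ ((n : ℤ) - k).toNat := Nat.find_min' hex hzero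
  have hkey := key (i - 1)
  have hi1 : i - 1 + 1 = i := by omega
  rw [hi1, hiz, map_zero] at hkey
  have hc0 : ((((i - 1 : ℕ) : ℤ) + 1) * ((n : ℤ) - k - ((i - 1 : ℕ) : ℤ)) : ℤ) = 0 := by
    have := (smul_eq_zero.mp hkey.symm).resolve_right hprev
    exact_mod_cast this
  have hiN : ((n : ℤ) - k).toNat = (n : ℤ) - k := Int.toNat_of_nonneg (by omega)
  have h1 : ((i : ℤ)) ≤ (n : ℤ) - k := by
    have := hle
    omega
  rcases mul_eq_zero.mp hc0 with h | h
  · omega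
  · omega
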